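/- If u = A + B√D ∈ S_D and u₂ = (BD² + AD√D)/T where T is the largest integer cube dividing gcd(BD², AD), then u₂ = (√D)³·u/T, N(u₂) = -D³·N(u)/T², N(u₂) is a perfect cube, and u₂ ∈ S_D with C(u₂) = C(u). -/

import Mathlib

lemma intCast_isIntegral (A : ℤ) : IsIntegral ℤ ((A:ℝ)) :=
  ⟨Polynomial.X - Polynomial.C A, Polynomial.monic_X_sub_C _, by
    simp only [Polynomial.eval₂_sub, Polynomial.eval₂_X, Polynomial.eval₂_C,
      Int.coe_castRingHom, algebraMap_int_eq, sub_self]⟩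

lemma sqrtD_isIntegral (D : ℤ) (hD : 0 ≤ D) : IsIntegral ℤ (Real.sqrt D) := by
  refine ⟨Polynomial.X^2 - Polynomial.C D, Polynomial.monic_X_pow_sub_C _ (by norm_num), ?_⟩
  simp only [Polynomial.eval₂_sub, Polynomial.eval₂_pow, Polynomial.eval₂_X,
    Polynomial.eval₂_C, Int.coe_castRingHom]
  rw [Real.sq_sqrt (by positivity : (0:ℝ) ≤ (D:ℝ))]; simp

lemma prime_coprime_int (q : ℕ) (hq : q.Prime) (x : ℤ) (h : ¬ ((q:ℤ) ∣ x)) :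
    IsCoprime ((q:ℤ)) x := by
  rw [Int.isCoprime_iff_gcd_eq_one]
  have h' : ¬ q ∣ x.natAbs := by
    intro hd; exact h (Int.natCast_dvd.mpr hd)
  simpa [Int.gcd] using (Nat.Prime.coprime_iff_not_dvd hq).mpr h'

/-- `Cval A B D` is the product of the distinct odd primes that divide `gcd(A, B)`
but do not divide `D`. -/
def Cval (A B D : ℤ) : ℤ :=
  ∏ q ∈ (Int.gcd A B).primeFactors.filter (fun q : ℕ => Odd q ∧ ¬ ((q : ℤ) ∣ D)), (q : ℤ)

/-- `A + B√D` is a cube in the ring of integers of `ℚ(√D)`. -/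
def IsCubeInO (D A B : ℤ) : Prop :=
  ∃ r s : ℚ, IsIntegral ℤ ((r : ℝ) + (s : ℝ) * Real.sqrt D) ∧
    ((r : ℝ) + (s : ℝ) * Real.sqrt D) ^ 3 = (A : ℝ) + (B : ℝ) * Real.sqrt D

/-- Membership of `u = A + B√D` in the set `𝒮_D`. -/
def InSD (D A B : ℤ) : Prop :=
  (∃ n : ℤ, A ^ 2 - B ^ 2 * D = n ^ 3) ∧ ¬ IsCubeInO D A B ∧
    ∀ p : ℕ, p.Prime → ¬ (p ^ 3 ∣ Int.gcd A B)

/-- If `u = A + B√D ∈ 𝒮_D` and `u₂ = (BD² + AD√D)/T` where `T` is the largest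
integer cube dividing `gcd(BD², AD)`, then `u₂ = (√D)³·u/T`,
`N(u₂) = -D³·N(u)/T²` is a perfect cube, and `u₂ ∈ 𝒮_D` with `C(u₂) = C(u)`. -/
theorem stmt_13 (D A B T : ℤ) (hD : 1 < D) (hsq : Squarefree D) (hu : InSD D A B)
    (hT0 : 0 < T) (hTcube : ∃ t : ℤ, T = t ^ 3)
    (hTdvd : T ∣ (Int.gcd (B * D ^ 2) (A * D) : ℤ))
    (hTmax : ∀ t : ℤ, t ^ 3 ∣ (Int.gcd (B * D ^ 2) (A * D) : ℤ) → t ^ 3 ∣ T) :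
    (((B * D ^ 2 : ℤ) : ℝ) + ((A * D : ℤ) : ℝ) * Real.sqrt D) / (T : ℝ) =
        Real.sqrt D ^ 3 * (((A : ℝ) + (B : ℝ) * Real.sqrt D) / (T : ℝ)) ∧
      (B * D ^ 2 / T) ^ 2 - (A * D / T) ^ 2 * D = -D ^ 3 * (A ^ 2 - B ^ 2 * D) / T ^ 2 ∧
      (∃ k : ℤ, (B * D ^ 2 / T) ^ 2 - (A * D / T) ^ 2 * D = k ^ 3) ∧
      InSD D (B * D ^ 2 / T) (A * D / T) ∧
      Cval (B * D ^ 2 / T) (A * D / T) D = Cval A B D := by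
  obtain ⟨⟨n, hn⟩, hnotcube, hnocube3⟩ := hu
  obtain ⟨t, hTt⟩ := hTcube
  have hD0 : (0:ℤ) < D := by linarith
  have hDR0 : (0:ℝ) < (D:ℝ) := by exact_mod_cast hD0
  have hsq2 : Real.sqrt (D:ℝ) ^ 2 = (D:ℝ) := Real.sq_sqrt hDR0.le
  have hTne : T ≠ 0 := hT0.ne'
  have htne : t ≠ 0 := by rintro rfl; rw [hTt] at hT0; simp at hT0
  have hTdvd1 : T ∣ B * D ^ 2 := hTdvd.trans (Int.gcd_dvd_left _ _)
  have hTdvd2 : T ∣ A * D := hTdvd.trans (Int.gcd_dvd_right _ _)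
  set a := B * D ^ 2 / T with ha_def
  set b := A * D / T with hb_def
  have ha : a * T = B * D ^ 2 := Int.ediv_mul_cancel hTdvd1
  have hb : b * T = A * D := Int.ediv_mul_cancel hTdvd2
  -- Part 1
  have part1 : (((B * D ^ 2 : ℤ) : ℝ) + ((A * D : ℤ) : ℝ) * Real.sqrt D) / (T : ℝ) =
      Real.sqrt D ^ 3 * (((A : ℝ) + (B : ℝ) * Real.sqrt D) / (T : ℝ)) := by
    have h1 : (((B * D ^ 2 : ℤ) : ℝ) + ((A * D : ℤ) : ℝ) * Real.sqrt D) =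
        Real.sqrt D ^ 3 * (((A : ℝ) + (B : ℝ) * Real.sqrt D)) := by
      push_cast
      linear_combination (-((A:ℝ) * Real.sqrt (D:ℝ) + (B:ℝ) * Real.sqrt (D:ℝ) ^ 2 + (B:ℝ) * (D:ℝ))) * hsq2
    rw [← mul_div_assoc, h1]
  -- Part 2
  have key2 : (a ^ 2 - b ^ 2 * D) * T ^ 2 = -D ^ 3 * (A ^ 2 - B ^ 2 * D) := by
    linear_combination (a * T + B * D ^ 2) * ha - D * (b * T + A * D) * hb
  have part2 : a ^ 2 - b ^ 2 * D = -D ^ 3 * (A ^ 2 - B ^ 2 * D) / T ^ 2 := by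
    rw [← key2, Int.mul_ediv_cancel _ (pow_ne_zero 2 hTne)]
  -- Part 3
  have ht6 : (a ^ 2 - b ^ 2 * D) * (t ^ 2) ^ 3 = -(D * n) ^ 3 := by
    have h := key2
    rw [hn, hTt] at h
    linear_combination h
  have hdvd6 : (t ^ 2) ^ 3 ∣ (D * n) ^ 3 := ⟨-(a ^ 2 - b ^ 2 * D), by linear_combination ht6⟩
  have ht2 : t ^ 2 ∣ D * n := (Int.pow_dvd_pow_iff (by norm_num)).mp hdvd6
  obtain ⟨m, hm⟩ := ht2
  have part3val : a ^ 2 - b ^ 2 * D = (-m) ^ 3 := by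
    apply mul_right_cancel₀ (pow_ne_zero 3 (pow_ne_zero 2 htne))
    rw [ht6, hm]; ring
  -- gcd nonzero facts
  have hABgcd : Int.gcd A B ≠ 0 := by
    rw [Ne, Int.gcd_eq_zero_iff]
    rintro ⟨rfl, rfl⟩
    exact hnotcube ⟨0, 0, by simpa using isIntegral_zero, by push_cast; ring⟩
  have habgcd : Int.gcd a b ≠ 0 := by
    rw [Ne, Int.gcd_eq_zero_iff]
    rintro ⟨h1, h2⟩
    have hB0 : B = 0 := by
      have h3 : B * D ^ 2 = 0 := by rw [← ha, h1]; ring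
      rcases mul_eq_zero.mp h3 with h | h
      · exact h
      · exact absurd h (pow_ne_zero 2 hD0.ne')
    have hA0 : A = 0 := by
      have h3 : A * D = 0 := by rw [← hb, h2]; ring
      rcases mul_eq_zero.mp h3 with h | h
      · exact h
      · exact absurd h hD0.ne'
    exact hABgcd (Int.gcd_eq_zero_iff.mpr ⟨hA0, hB0⟩)
  -- Part 4b : not a cube in O
  have notcube : ¬ IsCubeInO D a b := by
    rintro ⟨r, s, hint, heq⟩
    apply hnotcube
    have hcube : ((((t:ℚ) * s : ℚ):ℝ) + (((t:ℚ) * r / (D:ℚ) : ℚ):ℝ) * Real.sqrt D) ^ 3 =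
        (A:ℝ) + (B:ℝ) * Real.sqrt D := by
      have hDne : (D:ℝ) ≠ 0 := hDR0.ne'
      have e1 : ((((t:ℚ) * s : ℚ):ℝ) + (((t:ℚ) * r / (D:ℚ) : ℚ):ℝ) * Real.sqrt D) * (D:ℝ) =
          (t:ℝ) * ((r:ℝ) + (s:ℝ) * Real.sqrt D) * Real.sqrt D := by
        push_cast
        field_simp
        linear_combination (-(s:ℝ)) * hsq2
      have hA3 : (t:ℝ) ^ 3 * ((a:ℤ):ℝ) = (B:ℝ) * (D:ℝ) ^ 2 := by
        have hz : t ^ 3 * a = B * D ^ 2 := by rw [← hTt, mul_comm]; exact ha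
        exact_mod_cast congrArg (Int.cast : ℤ → ℝ) hz
      have hB3 : (t:ℝ) ^ 3 * ((b:ℤ):ℝ) = (A:ℝ) * (D:ℝ) := by
        have hz : t ^ 3 * b = A * D := by rw [← hTt, mul_comm]; exact hb
        exact_mod_cast congrArg (Int.cast : ℤ → ℝ) hz
      have e2 : ((((t:ℚ) * s : ℚ):ℝ) + (((t:ℚ) * r / (D:ℚ) : ℚ):ℝ) * Real.sqrt D) ^ 3 * (D:ℝ) ^ 3 =
          ((A:ℝ) + (B:ℝ) * Real.sqrt D) * (D:ℝ) ^ 3 := by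
        calc ((((t:ℚ) * s : ℚ):ℝ) + (((t:ℚ) * r / (D:ℚ) : ℚ):ℝ) * Real.sqrt D) ^ 3 * (D:ℝ) ^ 3
            = (((((t:ℚ) * s : ℚ):ℝ) + (((t:ℚ) * r / (D:ℚ) : ℚ):ℝ) * Real.sqrt D) * (D:ℝ)) ^ 3 := by
              ring
          _ = (t:ℝ) ^ 3 * (((r:ℝ) + (s:ℝ) * Real.sqrt D) ^ 3) * Real.sqrt D ^ 3 := by
              rw [e1]; ring
          _ = (t:ℝ) ^ 3 * (((a:ℤ):ℝ) + ((b:ℤ):ℝ) * Real.sqrt D) * Real.sqrt D ^ 3 := by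
              rw [heq]
          _ = ((A:ℝ) + (B:ℝ) * Real.sqrt D) * (D:ℝ) ^ 3 := by
              linear_combination (Real.sqrt (D:ℝ) ^ 3) * hA3 + (Real.sqrt (D:ℝ) ^ 4) * hB3 +
                ((B:ℝ) * (D:ℝ) ^ 2 * Real.sqrt (D:ℝ) +
                  (A:ℝ) * (D:ℝ) * (Real.sqrt (D:ℝ) ^ 2 + (D:ℝ))) * hsq2
      exact mul_right_cancel₀ (pow_ne_zero 3 hDR0.ne') e2
    refine ⟨(t:ℚ) * s, (t:ℚ) * r / (D:ℚ), ?_, hcube⟩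
    apply IsIntegral.of_pow (n := 3) (by norm_num)
    rw [hcube]
    exact (intCast_isIntegral A).add ((intCast_isIntegral B).mul (sqrtD_isIntegral D hD0.le))
  -- Part 4c : no prime cube divides gcd
  have cube3 : ∀ p : ℕ, p.Prime → ¬ ((p:ℕ) ^ 3 ∣ Int.gcd a b) := by
    intro p hp hdvd
    have h0 : ((p:ℤ)) ^ 3 ∣ (Int.gcd a b : ℤ) := by exact_mod_cast Int.natCast_dvd_natCast.mpr hdvd
    have h1 : ((p:ℤ)) ^ 3 ∣ a := h0.trans (Int.gcd_dvd_left _ _)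
    have h2 : ((p:ℤ)) ^ 3 ∣ b := h0.trans (Int.gcd_dvd_right _ _)
    have h3 : ((p:ℤ) * t) ^ 3 ∣ (Int.gcd (B * D ^ 2) (A * D) : ℤ) := by
      apply Int.dvd_coe_gcd
      · have : ((p:ℤ)) ^ 3 * T ∣ a * T := mul_dvd_mul_right h1 T
        rw [ha] at this
        calc ((p:ℤ) * t) ^ 3 = (p:ℤ) ^ 3 * T := by rw [hTt]; ring
          _ ∣ B * D ^ 2 := this
      · have : ((p:ℤ)) ^ 3 * T ∣ b * T := mul_dvd_mul_right h2 T
        rw [hb] at this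
        calc ((p:ℤ) * t) ^ 3 = (p:ℤ) ^ 3 * T := by rw [hTt]; ring
          _ ∣ A * D := this
    have h4 := hTmax _ h3
    rw [hTt] at h4
    have h5 : (p:ℤ) ^ 3 * t ^ 3 ∣ 1 * t ^ 3 := by
      have : ((p:ℤ) * t) ^ 3 = (p:ℤ) ^ 3 * t ^ 3 := by ring
      rw [this] at h4; simpa using h4
    have h6 : (p:ℤ) ^ 3 ∣ 1 := (mul_dvd_mul_iff_right (pow_ne_zero 3 htne)).mp h5
    have h7 := Int.le_of_dvd one_pos h6
    have h8 : (2:ℤ) ≤ (p:ℤ) := by exact_mod_cast hp.two_le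
    have h9 : (2:ℤ)^3 ≤ (p:ℤ)^3 := pow_le_pow_left₀ (by norm_num) h8 3
    linarith
  -- key prime equivalence for Cval
  have hqiff : ∀ q : ℕ, q.Prime → ¬ ((q:ℤ) ∣ D) → (q ∣ Int.gcd a b ↔ q ∣ Int.gcd A B) := by
    intro q hq hqD
    have hqZ : Prime ((q:ℤ)) := Nat.prime_iff_prime_int.mp hq
    have hqT : ¬ ((q:ℤ) ∣ T) := by
      intro hqT'
      have hqt : (q:ℤ) ∣ t := by
        have h' : (q:ℤ) ∣ t ^ 3 := hTt ▸ hqT'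
        exact hqZ.dvd_of_dvd_pow h'
      have h1 : ((q:ℤ)) ^ 3 ∣ T := hTt ▸ pow_dvd_pow_of_dvd hqt 3
      have h2 : ((q:ℤ)) ^ 3 ∣ B * D ^ 2 := h1.trans hTdvd1
      have h3 : ((q:ℤ)) ^ 3 ∣ A * D := h1.trans hTdvd2
      have hcop : IsCoprime ((q:ℤ)) D := prime_coprime_int q hq D hqD
      have hB' : ((q:ℤ)) ^ 3 ∣ B := (hcop.pow (m := 3) (n := 2)).dvd_of_dvd_mul_right h2
      have hA' : ((q:ℤ)) ^ 3 ∣ A := (hcop.pow_left).dvd_of_dvd_mul_right h3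
      apply hnocube3 q hq
      have h4 : ((q:ℤ)) ^ 3 ∣ (Int.gcd A B : ℤ) := Int.dvd_coe_gcd hA' hB'
      exact_mod_cast h4
    have hcopD : IsCoprime ((q:ℤ)) D := prime_coprime_int q hq D hqD
    have hcopT : IsCoprime ((q:ℤ)) T := prime_coprime_int q hq T hqT
    constructor
    · intro h
      have h' : (q:ℤ) ∣ (Int.gcd a b : ℤ) := by exact_mod_cast Int.natCast_dvd_natCast.mpr h
      have hqa : (q:ℤ) ∣ a := h'.trans (Int.gcd_dvd_left _ _)
      have hqb : (q:ℤ) ∣ b := h'.trans (Int.gcd_dvd_right _ _)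
      have hqB : (q:ℤ) ∣ B := by
        have h2 : (q:ℤ) ∣ B * D ^ 2 := by rw [← ha]; exact hqa.mul_right T
        exact (hcopD.pow_right (n := 2)).dvd_of_dvd_mul_right h2
      have hqA : (q:ℤ) ∣ A := by
        have h2 : (q:ℤ) ∣ A * D := by rw [← hb]; exact hqb.mul_right T
        exact hcopD.dvd_of_dvd_mul_right h2
      have h4 : (q:ℤ) ∣ (Int.gcd A B : ℤ) := Int.dvd_coe_gcd hqA hqB
      exact_mod_cast h4
    · intro h
      have h' : (q:ℤ) ∣ (Int.gcd A B : ℤ) := by exact_mod_cast Int.natCast_dvd_natCast.mpr h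
      have hqA : (q:ℤ) ∣ A := h'.trans (Int.gcd_dvd_left _ _)
      have hqB : (q:ℤ) ∣ B := h'.trans (Int.gcd_dvd_right _ _)
      have hqa : (q:ℤ) ∣ a := by
        have h2 : (q:ℤ) ∣ a * T := by rw [ha]; exact (hqB.mul_right (D ^ 2))
        exact hcopT.dvd_of_dvd_mul_right h2
      have hqb : (q:ℤ) ∣ b := by
        have h2 : (q:ℤ) ∣ b * T := by rw [hb]; exact (hqA.mul_right D)
        exact hcopT.dvd_of_dvd_mul_right h2
      have h4 : (q:ℤ) ∣ (Int.gcd a b : ℤ) := Int.dvd_coe_gcd hqa hqb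
      exact_mod_cast h4
  -- Part 5 : Cval equality
  have part5 : Cval a b D = Cval A B D := by
    unfold Cval
    congr 1
    ext q
    simp only [Finset.mem_filter, Nat.mem_primeFactors]
    constructor
    · rintro ⟨⟨hq, hdvd, -⟩, hodd, hqD⟩
      exact ⟨⟨hq, (hqiff q hq hqD).mp hdvd, hABgcd⟩, hodd, hqD⟩
    · rintro ⟨⟨hq, hdvd, -⟩, hodd, hqD⟩
      exact ⟨⟨hq, (hqiff q hq hqD).mpr hdvd, habgcd⟩, hodd, hqD⟩
  exact ⟨part1, part2, ⟨-m, part3val⟩, ⟨⟨-m, part3val⟩, notcube, cube3⟩, part5⟩
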